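/- Suppose the ODE system in (α, β): α̇ = 2(-∂_y F(α-β, β-α) + ∂_y F(2α, 2β) - ∂_y F(α+β, α+β)), β̇ = 2(∂_x F(α-β, β-α) - ∂_x F(2α, 2β) + ∂_x F(α+β, α+β)) has a C¹ solution with initial data (α₀, β₀). Then the four paths a₁ = c + (α,β), a₂ = c - (α,β), a₃ = c + (β,α), a₄ = c - (β,α) with c = (0.5, 0.5) solve the reduced dynamical law ȧ_j = 2𝕁 Σ_{k≠j} d_k ∇F(a_j - a_k) - 4π𝕁 Σ_m d_m a_m with degrees d₁ = d₂ = +1, d₃ = d₄ = -1 and initial data obtained by setting (α,β) = (α₀,β₀). -/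

import Mathlib

/-- If `(α,β)` is a `C¹` solution of
`α̇ = 2(-∂_yF(α-β, β-α) + ∂_yF(2α,2β) - ∂_yF(α+β, α+β))`,
`β̇ = 2(∂_xF(α-β, β-α) - ∂_xF(2α,2β) + ∂_xF(α+β, α+β))` with data `(α₀,β₀)`,
then `a₁ = c+(α,β)`, `a₂ = c-(α,β)`, `a₃ = c+(β,α)`, `a₄ = c-(β,α)` with `c=(0.5,0.5)`
solve the reduced dynamical law `ȧ_j = 2𝕁 Σ_{k≠j} d_k ∇F(a_j-a_k) - 4π𝕁 Σ_m d_m a_m`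
with `d₁ = d₂ = 1`, `d₃ = d₄ = -1` and the corresponding initial data. -/
theorem stmt_18 (F : ℝ × ℝ → ℝ)
    (hFsym : ∀ x y : ℝ, (x, y) ≠ (0, 0) →
      F (-x, y) = F (x, y) ∧ F (x, -y) = F (x, y) ∧ F (y, x) = F (x, y))
    (hFdiff : ∀ x : ℝ × ℝ, x ≠ 0 → ContDiffAt ℝ 1 F x)
    (Jmat : ℝ × ℝ → ℝ × ℝ) (hJ : Jmat = fun v => (v.2, -v.1))
    (gF : ℝ × ℝ → ℝ × ℝ)
    (hgF : gF = fun x => (fderiv ℝ F x ((1:ℝ), (0:ℝ)), fderiv ℝ F x ((0:ℝ), (1:ℝ))))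
    (α β : ℝ → ℝ) (α₀ β₀ : ℝ) (hα0 : α 0 = α₀) (hβ0 : β 0 = β₀)
    (hnd : ∀ t : ℝ, (α t, β t) ≠ (0, 0) ∧ α t ≠ β t ∧ α t + β t ≠ 0)
    (hαODE : ∀ t : ℝ, HasDerivAt α
      (2 * (-(gF (α t - β t, β t - α t)).2 + (gF (2 * α t, 2 * β t)).2
        - (gF (α t + β t, α t + β t)).2)) t)
    (hβODE : ∀ t : ℝ, HasDerivAt β
      (2 * ((gF (α t - β t, β t - α t)).1 - (gF (2 * α t, 2 * β t)).1
        + (gF (α t + β t, α t + β t)).1)) t)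
    (c : ℝ × ℝ) (hc : c = (0.5, 0.5))
    (a1 a2 a3 a4 : ℝ → ℝ × ℝ)
    (ha1 : a1 = fun t => c + (α t, β t)) (ha2 : a2 = fun t => c - (α t, β t))
    (ha3 : a3 = fun t => c + (β t, α t)) (ha4 : a4 = fun t => c - (β t, α t)) :
    a1 0 = c + (α₀, β₀) ∧ a2 0 = c - (α₀, β₀) ∧ a3 0 = c + (β₀, α₀) ∧ a4 0 = c - (β₀, α₀) ∧
    (∀ t : ℝ, HasDerivAt a1
      ((2:ℝ) • Jmat ((1:ℝ) • gF (a1 t - a2 t) + (-1:ℝ) • gF (a1 t - a3 t)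
          + (-1:ℝ) • gF (a1 t - a4 t))
        - (4 * Real.pi) • Jmat (a1 t + a2 t - a3 t - a4 t)) t) ∧
    (∀ t : ℝ, HasDerivAt a2
      ((2:ℝ) • Jmat ((1:ℝ) • gF (a2 t - a1 t) + (-1:ℝ) • gF (a2 t - a3 t)
          + (-1:ℝ) • gF (a2 t - a4 t))
        - (4 * Real.pi) • Jmat (a1 t + a2 t - a3 t - a4 t)) t) ∧
    (∀ t : ℝ, HasDerivAt a3
      ((2:ℝ) • Jmat ((1:ℝ) • gF (a3 t - a1 t) + (1:ℝ) • gF (a3 t - a2 t)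
          + (-1:ℝ) • gF (a3 t - a4 t))
        - (4 * Real.pi) • Jmat (a1 t + a2 t - a3 t - a4 t)) t) ∧
    (∀ t : ℝ, HasDerivAt a4
      ((2:ℝ) • Jmat ((1:ℝ) • gF (a4 t - a1 t) + (1:ℝ) • gF (a4 t - a2 t)
          + (-1:ℝ) • gF (a4 t - a3 t))
        - (4 * Real.pi) • Jmat (a1 t + a2 t - a3 t - a4 t)) t) := by

  have hFneg : ∀ p : ℝ × ℝ, p ≠ 0 → F (-p) = F p := by
    intro p hp
    have hp' : ((p.1, p.2) : ℝ × ℝ) ≠ (0, 0) := by rw [Prod.mk_zero_zero]; simpa using hp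
    have hp2 : ((p.1, -p.2) : ℝ × ℝ) ≠ (0, 0) := by
      simp only [ne_eq, Prod.mk.injEq, neg_eq_zero, not_and] at hp' ⊢
      exact hp'
    have hnegp : -p = ((-p.1, -p.2) : ℝ × ℝ) := by
      ext <;> simp
    rw [hnegp, (hFsym p.1 (-p.2) hp2).1, (hFsym p.1 p.2 hp').2.1]
  have hodd : ∀ v : ℝ × ℝ, v ≠ 0 → gF (-v) = - gF v := by
    intro v hv
    have hv' : -v ≠ 0 := neg_ne_zero.mpr hv
    have hL : HasFDerivAt F (fderiv ℝ F (-v)) (-v) :=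
      ((hFdiff (-v) hv').differentiableAt one_ne_zero).hasFDerivAt
    have hneg : HasFDerivAt (fun p : ℝ × ℝ => -p)
        (-(ContinuousLinearMap.id ℝ (ℝ × ℝ))) v := (hasFDerivAt_id v).neg
    have hcomp := hL.comp v hneg
    have hev : (fun p : ℝ × ℝ => F (-p)) =ᶠ[nhds v] F := by
      filter_upwards [isOpen_compl_singleton.mem_nhds hv] with p hp
      exact hFneg p hp
    have hF : HasFDerivAt F
        ((fderiv ℝ F (-v)).comp (-(ContinuousLinearMap.id ℝ (ℝ × ℝ)))) v :=
      HasFDerivAt.congr_of_eventuallyEq hcomp hev.symm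
    rw [hgF]
    simp [hF.fderiv, Prod.ext_iff]
  have hswap : ∀ v : ℝ × ℝ, v ≠ 0 → gF (v.2, v.1) = ((gF v).2, (gF v).1) := by
    intro v hv
    have hv' : ((v.2, v.1) : ℝ × ℝ) ≠ 0 := by
      simp only [ne_eq, Prod.ext_iff, Prod.fst_zero, Prod.snd_zero, not_and] at hv ⊢
      intro h2 h1
      exact hv h1 h2
    have hL : HasFDerivAt F (fderiv ℝ F (v.2, v.1)) ((v.2, v.1) : ℝ × ℝ) :=
      ((hFdiff _ hv').differentiableAt one_ne_zero).hasFDerivAt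
    set S : (ℝ × ℝ) →L[ℝ] (ℝ × ℝ) :=
      (ContinuousLinearMap.snd ℝ ℝ ℝ).prod (ContinuousLinearMap.fst ℝ ℝ ℝ) with hS
    have hs : HasFDerivAt (fun p : ℝ × ℝ => ((p.2, p.1) : ℝ × ℝ)) S v := S.hasFDerivAt
    have hcomp := hL.comp v hs
    have hev : (fun p : ℝ × ℝ => F (p.2, p.1)) =ᶠ[nhds v] F := by
      filter_upwards [isOpen_compl_singleton.mem_nhds hv] with p hp
      have hp' : ((p.1, p.2) : ℝ × ℝ) ≠ (0, 0) := by rw [Prod.mk_zero_zero]; simpa using hp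
      have := (hFsym p.1 p.2 hp').2.2
      simpa using this
    have hF : HasFDerivAt F ((fderiv ℝ F (v.2, v.1)).comp S) v :=
      HasFDerivAt.congr_of_eventuallyEq hcomp hev.symm
    rw [hgF]
    simp [hF.fderiv, hS, Prod.ext_iff]
  refine ⟨by simp [ha1, hα0, hβ0], by simp [ha2, hα0, hβ0], by simp [ha3, hα0, hβ0],
    by simp [ha4, hα0, hβ0], ?_, ?_, ?_, ?_⟩ <;> intro t <;>
  · obtain ⟨h1, h2, h3⟩ := hnd t
    have hαβ : ¬(α t = 0 ∧ β t = 0) := by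
      intro h; exact h1 (by simp [h.1, h.2])
    have hnd1 : ((2 * α t, 2 * β t) : ℝ × ℝ) ≠ 0 := by
      simp only [ne_eq, Prod.ext_iff, Prod.fst_zero, Prod.snd_zero, mul_eq_zero, not_and]
      intro ha hb
      exact hαβ ⟨ha.resolve_left (by norm_num), hb.resolve_left (by norm_num)⟩
    have hnd2 : ((α t - β t, β t - α t) : ℝ × ℝ) ≠ 0 := by
      simp only [ne_eq, Prod.ext_iff, Prod.fst_zero, Prod.snd_zero, sub_eq_zero, not_and]
      intro h; exact absurd h h2
    have hnd3 : ((α t + β t, α t + β t) : ℝ × ℝ) ≠ 0 := by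
      simp only [ne_eq, Prod.ext_iff, Prod.fst_zero, Prod.snd_zero, not_and]
      intro h; exact absurd h h3
    set A := gF (α t - β t, β t - α t) with hA
    set B := gF (2 * α t, 2 * β t) with hB
    set C := gF (α t + β t, α t + β t) with hC
    have hA2 : A.2 = -A.1 := by
      have h1' := hswap _ hnd2
      have h2' : (((α t - β t, β t - α t) : ℝ × ℝ).2, ((α t - β t, β t - α t) : ℝ × ℝ).1)
          = -((α t - β t, β t - α t) : ℝ × ℝ) := by
        simp only [Prod.ext_iff, Prod.fst_neg, Prod.snd_neg, Prod.mk.injEq]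
        constructor <;> ring
      rw [h2', hodd _ hnd2] at h1'
      have := congrArg Prod.fst h1'
      simpa [hA, eq_comm] using this
    have hC2 : C.2 = C.1 := by
      have h1' := hswap _ hnd3
      have := congrArg Prod.fst h1'
      simpa [hC] using this.symm
    have hBsw : gF (2 * β t, 2 * α t) = (B.2, B.1) := by
      have := hswap _ hnd1
      simpa [hB] using this
    have hAneg : gF (-(α t - β t), -(β t - α t)) = -A := by
      have := hodd _ hnd2
      simpa [hA, Prod.ext_iff] using this
    have hBneg : gF (-(2 * α t), -(2 * β t)) = -B := by
      have := hodd _ hnd1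
      simpa [hB, Prod.ext_iff] using this
    have hCneg : gF (-(α t + β t), -(α t + β t)) = -C := by
      have := hodd _ hnd3
      simpa [hC, Prod.ext_iff] using this
    have hBneg' : gF (-(2 * β t), -(2 * α t)) = -(B.2, B.1) := by
      have hnd1' : ((2 * β t, 2 * α t) : ℝ × ℝ) ≠ 0 := by
        simp only [ne_eq, Prod.ext_iff, Prod.fst_zero, Prod.snd_zero, mul_eq_zero, not_and]
        intro ha hb
        exact hαβ ⟨hb.resolve_left (by norm_num), ha.resolve_left (by norm_num)⟩
      have := hodd _ hnd1'
      simp only [Prod.ext_iff] at this ⊢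
      rw [hBsw] at this
      simpa using this
    have hda : HasDerivAt (fun s => (α s, β s))
        ((2 * (-A.2 + B.2 - C.2), 2 * (A.1 - B.1 + C.1)) : ℝ × ℝ) t :=
      (hαODE t).prodMk (hβODE t)
    have hdb : HasDerivAt (fun s => (β s, α s))
        ((2 * (A.1 - B.1 + C.1), 2 * (-A.2 + B.2 - C.2)) : ℝ × ℝ) t :=
      (hβODE t).prodMk (hαODE t)
    rw [ha1, ha2, ha3, ha4]

    first
    | -- a1
      have key := hda.const_add c
      convert key using 1
      case e'_4 => rfl
      case e'_5 => rfl
      case e'_6 => rfl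
      have r12 : c + (α t, β t) - (c - (α t, β t)) = ((2 * α t, 2 * β t) : ℝ × ℝ) := by
        simp only [Prod.ext_iff, Prod.fst_sub, Prod.snd_sub, Prod.fst_add, Prod.snd_add,
          Prod.mk.injEq]
        constructor <;> ring
      have r13 : c + (α t, β t) - (c + (β t, α t)) = ((α t - β t, β t - α t) : ℝ × ℝ) := by
        simp only [Prod.ext_iff, Prod.fst_sub, Prod.snd_sub, Prod.fst_add, Prod.snd_add,
          Prod.mk.injEq]
        constructor <;> ring
      have r14 : c + (α t, β t) - (c - (β t, α t)) = ((α t + β t, α t + β t) : ℝ × ℝ) := by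
        simp only [Prod.ext_iff, Prod.fst_sub, Prod.snd_sub, Prod.fst_add, Prod.snd_add,
          Prod.mk.injEq]
        constructor <;> ring
      have rz : c + (α t, β t) + (c - (α t, β t)) - (c + (β t, α t)) - (c - (β t, α t))
          = (0 : ℝ × ℝ) := by
        simp only [Prod.ext_iff, Prod.fst_sub, Prod.snd_sub, Prod.fst_add, Prod.snd_add,
          Prod.fst_zero, Prod.snd_zero]
        constructor <;> ring
      rw [r12, r13, r14, rz, ← hA, ← hB, ← hC, hJ]
      simp only [Prod.ext_iff, Prod.smul_fst, Prod.smul_snd, Prod.fst_add, Prod.snd_add,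
        Prod.fst_sub, Prod.snd_sub, Prod.fst_neg, Prod.snd_neg, smul_eq_mul, Prod.fst_zero,
        Prod.snd_zero]
      constructor <;> ring
    | -- a2
      have key := hda.const_sub c
      convert key using 1
      case e'_4 => rfl
      case e'_5 => rfl
      case e'_6 => rfl
      have r21 : c - (α t, β t) - (c + (α t, β t)) = ((-(2 * α t), -(2 * β t)) : ℝ × ℝ) := by
        simp only [Prod.ext_iff, Prod.fst_sub, Prod.snd_sub, Prod.fst_add, Prod.snd_add,
          Prod.mk.injEq]
        constructor <;> ring
      have r23 : c - (α t, β t) - (c + (β t, α t))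
          = ((-(α t + β t), -(α t + β t)) : ℝ × ℝ) := by
        simp only [Prod.ext_iff, Prod.fst_sub, Prod.snd_sub, Prod.fst_add, Prod.snd_add,
          Prod.mk.injEq]
        constructor <;> ring
      have r24 : c - (α t, β t) - (c - (β t, α t))
          = ((-(α t - β t), -(β t - α t)) : ℝ × ℝ) := by
        simp only [Prod.ext_iff, Prod.fst_sub, Prod.snd_sub, Prod.mk.injEq]
        constructor <;> ring
      have rz : c + (α t, β t) + (c - (α t, β t)) - (c + (β t, α t)) - (c - (β t, α t))
          = (0 : ℝ × ℝ) := by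
        simp only [Prod.ext_iff, Prod.fst_sub, Prod.snd_sub, Prod.fst_add, Prod.snd_add,
          Prod.fst_zero, Prod.snd_zero]
        constructor <;> ring
      rw [r21, r23, r24, rz, hBneg, hCneg, hAneg, hJ]
      simp only [Prod.ext_iff, Prod.smul_fst, Prod.smul_snd, Prod.fst_add, Prod.snd_add,
        Prod.fst_sub, Prod.snd_sub, Prod.fst_neg, Prod.snd_neg, smul_eq_mul, Prod.fst_zero,
        Prod.snd_zero]
      constructor <;> ring
    | -- a3
      have key := hdb.const_add c
      convert key using 1
      case e'_4 => rfl
      case e'_5 => rfl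
      case e'_6 => rfl
      have r31 : c + (β t, α t) - (c + (α t, β t))
          = ((-(α t - β t), -(β t - α t)) : ℝ × ℝ) := by
        simp only [Prod.ext_iff, Prod.fst_sub, Prod.snd_sub, Prod.fst_add, Prod.snd_add,
          Prod.mk.injEq]
        constructor <;> ring
      have r32 : c + (β t, α t) - (c - (α t, β t)) = ((α t + β t, α t + β t) : ℝ × ℝ) := by
        simp only [Prod.ext_iff, Prod.fst_sub, Prod.snd_sub, Prod.fst_add, Prod.snd_add,
          Prod.mk.injEq]
        constructor <;> ring
      have r34 : c + (β t, α t) - (c - (β t, α t)) = ((2 * β t, 2 * α t) : ℝ × ℝ) := by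
        simp only [Prod.ext_iff, Prod.fst_sub, Prod.snd_sub, Prod.fst_add, Prod.snd_add,
          Prod.mk.injEq]
        constructor <;> ring
      have rz : c + (α t, β t) + (c - (α t, β t)) - (c + (β t, α t)) - (c - (β t, α t))
          = (0 : ℝ × ℝ) := by
        simp only [Prod.ext_iff, Prod.fst_sub, Prod.snd_sub, Prod.fst_add, Prod.snd_add,
          Prod.fst_zero, Prod.snd_zero]
        constructor <;> ring
      rw [r31, r32, r34, rz, hAneg, hBsw, ← hC, hJ]
      simp only [Prod.ext_iff, Prod.smul_fst, Prod.smul_snd, Prod.fst_add, Prod.snd_add,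
        Prod.fst_sub, Prod.snd_sub, Prod.fst_neg, Prod.snd_neg, smul_eq_mul, Prod.fst_zero,
        Prod.snd_zero]
      constructor <;> (rw [hA2, hC2]; ring)
    | -- a4
      have key := hdb.const_sub c
      convert key using 1
      case e'_4 => rfl
      case e'_5 => rfl
      case e'_6 => rfl
      have r41 : c - (β t, α t) - (c + (α t, β t))
          = ((-(α t + β t), -(α t + β t)) : ℝ × ℝ) := by
        simp only [Prod.ext_iff, Prod.fst_sub, Prod.snd_sub, Prod.fst_add, Prod.snd_add,
          Prod.mk.injEq]
        constructor <;> ring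
      have r42 : c - (β t, α t) - (c - (α t, β t)) = ((α t - β t, β t - α t) : ℝ × ℝ) := by
        simp only [Prod.ext_iff, Prod.fst_sub, Prod.snd_sub, Prod.mk.injEq]
        constructor <;> ring
      have r43 : c - (β t, α t) - (c + (β t, α t))
          = ((-(2 * β t), -(2 * α t)) : ℝ × ℝ) := by
        simp only [Prod.ext_iff, Prod.fst_sub, Prod.snd_sub, Prod.fst_add, Prod.snd_add,
          Prod.mk.injEq]
        constructor <;> ring
      have rz : c + (α t, β t) + (c - (α t, β t)) - (c + (β t, α t)) - (c - (β t, α t))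
          = (0 : ℝ × ℝ) := by
        simp only [Prod.ext_iff, Prod.fst_sub, Prod.snd_sub, Prod.fst_add, Prod.snd_add,
          Prod.fst_zero, Prod.snd_zero]
        constructor <;> ring
      rw [r41, r42, r43, rz, hCneg, ← hA, hBneg', hJ]
      simp only [Prod.ext_iff, Prod.smul_fst, Prod.smul_snd, Prod.fst_add, Prod.snd_add,
        Prod.fst_sub, Prod.snd_sub, Prod.fst_neg, Prod.snd_neg, smul_eq_mul, Prod.fst_zero,
        Prod.snd_zero]
      constructor <;> (rw [hA2, hC2]; ring)
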